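/- Let X be a normed space, W a subspace of X, x ∈ X nonzero, and ε ∈ [0,1). Then ‖x + w‖² ≥ ‖x‖² − 2ε‖x‖‖w‖ for all w ∈ W if and only if there exists f in the subdifferential ∂‖x‖ (i.e., ‖f‖ = 1 and f(x) = ‖x‖) such that the restriction of f to W has norm at most ε. -/

import Mathlib

open Filter Set

set_option maxHeartbeats 2000000

theorem epsilon_birkhoff_subspace_iff
    {𝕜 X : Type*} [RCLike 𝕜] [NormedAddCommGroup X] [NormedSpace 𝕜 X]
    (W : Submodule 𝕜 X) (x : X) (hx : x ≠ 0) (ε : ℝ) (hε : ε ∈ Set.Ico (0 : ℝ) 1) :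
    (∀ w ∈ W, ‖x + w‖ ^ 2 ≥ ‖x‖ ^ 2 - 2 * ε * ‖x‖ * ‖w‖) ↔
      ∃ f : X →L[𝕜] 𝕜, ‖f‖ = 1 ∧ f x = (‖x‖ : 𝕜) ∧ ‖f ∘L W.subtypeL‖ ≤ ε := by
  obtain ⟨hε0, hε1⟩ := hε
  have hxpos : (0 : ℝ) < ‖x‖ := norm_pos_iff.mpr hx
  constructor
  · intro h
    -- Step 1: the quadratic condition implies the linear one
    have key : ∀ w ∈ W, ‖x‖ ≤ ‖x + w‖ + ε * ‖w‖ := by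
      intro w hw
      by_contra hlt
      push_neg at hlt
      set d : ℝ := ‖x‖ - ‖x + w‖ with hd
      have hdpos : ε * ‖w‖ < d := by simp only [hd]; linarith
      have hd0 : 0 < d := lt_of_le_of_lt (by positivity) hdpos
      have main : ∀ t : ℝ, 0 < t → t ≤ 1 → d * (2 * ‖x‖ - t * ‖w‖) ≤ 2 * ε * ‖x‖ * ‖w‖ := by
        intro t ht0 ht1
        set u : X := ((t : 𝕜)) • w with hu
        have hu_mem : u ∈ W := W.smul_mem _ hw
        have hnu : ‖u‖ = t * ‖w‖ := by
          rw [hu, norm_smul, RCLike.norm_ofReal, abs_of_pos ht0]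
        have hconv : ‖x + u‖ ≤ (1 - t) * ‖x‖ + t * ‖x + w‖ := by
          have hxu : x + u = (((1 - t : ℝ) : 𝕜)) • x + ((t : ℝ) : 𝕜) • (x + w) := by
            have hcoef : (((1 - t : ℝ) : 𝕜)) + ((t : ℝ) : 𝕜) = 1 := by push_cast; ring
            rw [smul_add]
            rw [← add_assoc, ← add_smul, hcoef, one_smul, hu]
          calc ‖x + u‖ = ‖(((1 - t : ℝ) : 𝕜)) • x + ((t : ℝ) : 𝕜) • (x + w)‖ := by rw [hxu]
            _ ≤ ‖(((1 - t : ℝ) : 𝕜)) • x‖ + ‖((t : ℝ) : 𝕜) • (x + w)‖ := norm_add_le _ _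
            _ = (1 - t) * ‖x‖ + t * ‖x + w‖ := by
                rw [norm_smul, norm_smul, RCLike.norm_ofReal, RCLike.norm_ofReal,
                  abs_of_nonneg (by linarith), abs_of_pos ht0]
        have hq : ‖x + u‖ ^ 2 ≥ ‖x‖ ^ 2 - 2 * ε * ‖x‖ * (t * ‖w‖) := by
          have := h u hu_mem
          rwa [hnu] at this
        have hlow : ‖x‖ - t * ‖w‖ ≤ ‖x + u‖ := by
          have h1 : ‖x‖ ≤ ‖x + u‖ + ‖u‖ := by
            calc ‖x‖ = ‖x + u + (-u)‖ := by rw [add_neg_cancel_right]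
              _ ≤ ‖x + u‖ + ‖-u‖ := norm_add_le _ _
              _ = ‖x + u‖ + ‖u‖ := by rw [norm_neg]
          rw [hnu] at h1; linarith
        -- combine
        have hCt0 : (0 : ℝ) ≤ ‖x + u‖ := norm_nonneg _
        have h2 : t * d ≤ ‖x‖ - ‖x + u‖ := by simp only [hd]; nlinarith
        have h3 : (‖x‖ - ‖x + u‖) * (‖x‖ + ‖x + u‖) ≤ 2 * ε * ‖x‖ * (t * ‖w‖) := by nlinarith
        have h4 : t * d * (‖x‖ + ‖x + u‖) ≤ 2 * ε * ‖x‖ * (t * ‖w‖) := by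
          calc t * d * (‖x‖ + ‖x + u‖) ≤ (‖x‖ - ‖x + u‖) * (‖x‖ + ‖x + u‖) := by nlinarith
            _ ≤ 2 * ε * ‖x‖ * (t * ‖w‖) := h3
        have h5 : t * d * (2 * ‖x‖ - t * ‖w‖) ≤ t * d * (‖x‖ + ‖x + u‖) := by
          have : 2 * ‖x‖ - t * ‖w‖ ≤ ‖x‖ + ‖x + u‖ := by linarith
          have htd : 0 ≤ t * d := by positivity
          exact mul_le_mul_of_nonneg_left this htd
        have h6 : t * (d * (2 * ‖x‖ - t * ‖w‖)) ≤ t * (2 * ε * ‖x‖ * ‖w‖) := by nlinarith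
        exact le_of_mul_le_mul_left h6 ht0
      rcases eq_or_lt_of_le (norm_nonneg w) with hB | hB
      · have := main 1 one_pos le_rfl
        nlinarith
      · set t0 : ℝ := min 1 (‖x‖ * (d - ε * ‖w‖) / (d * ‖w‖)) with ht0def
        have ht0pos : 0 < t0 := by
          apply lt_min one_pos
          have : 0 < d - ε * ‖w‖ := by linarith
          positivity
        have ht0le : t0 ≤ 1 := min_le_left _ _
        have hm := main t0 ht0pos ht0le
        have hq : t0 ≤ ‖x‖ * (d - ε * ‖w‖) / (d * ‖w‖) := min_le_right _ _
        have hdB : 0 < d * ‖w‖ := by positivity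
        have hq2 : t0 * (d * ‖w‖) ≤ ‖x‖ * (d - ε * ‖w‖) := by
          calc t0 * (d * ‖w‖) ≤ (‖x‖ * (d - ε * ‖w‖) / (d * ‖w‖)) * (d * ‖w‖) :=
                mul_le_mul_of_nonneg_right hq hdB.le
            _ = ‖x‖ * (d - ε * ‖w‖) := div_mul_cancel₀ _ hdB.ne'
        nlinarith [mul_pos hxpos (show (0:ℝ) < d - ε * ‖w‖ by linarith)]
    -- Step 2: Hahn–Banach with the sublinear functional p
    letI : Module ℝ X := RestrictScalars.module ℝ 𝕜 X
    letI : IsScalarTower ℝ 𝕜 X := RestrictScalars.isScalarTower ℝ 𝕜 X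
    letI : NormedSpace ℝ X := NormedSpace.restrictScalars ℝ 𝕜 X
    have rsmul : ∀ (r : ℝ) (v : X), r • v = ((r : 𝕜)) • v := by
      intro r v
      rw [RCLike.ofReal_alg, smul_assoc, one_smul]
    have hWsmul : ∀ (r : ℝ) (v : X), v ∈ W → r • v ∈ W := by
      intro r v hv
      rw [rsmul]; exact W.smul_mem _ hv
    set p : X → ℝ := fun v => ⨅ w : W, (‖v + (w : X)‖ + ε * ‖(w : X)‖) with hp
    have hbdd : ∀ v : X, BddBelow (Set.range fun w : W => ‖v + (w : X)‖ + ε * ‖(w : X)‖) := by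
      intro v
      refine ⟨0, ?_⟩
      rintro r ⟨w, rfl⟩
      positivity
    have p_le : ∀ (v : X) (w : W), p v ≤ ‖v + (w : X)‖ + ε * ‖(w : X)‖ := by
      intro v w
      exact ciInf_le (hbdd v) w
    have le_p : ∀ (v : X) (c : ℝ), (∀ w : W, c ≤ ‖v + (w : X)‖ + ε * ‖(w : X)‖) → c ≤ p v := by
      intro v c hc
      exact le_ciInf hc
    have p_nonneg : ∀ v : X, 0 ≤ p v := fun v => le_p v 0 fun w => by positivity
    have p_le_norm : ∀ v : X, p v ≤ ‖v‖ := by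
      intro v
      have := p_le v 0
      simpa using this
    have N_hom : ∀ c : ℝ, 0 < c → ∀ v : X, p (c • v) = c * p v := by
      intro c hc v
      apply le_antisymm
      · rw [mul_comm, ← div_le_iff₀ hc]
        apply le_p
        intro w
        rw [div_le_iff₀ hc, mul_comm (‖v + (w : X)‖ + ε * ‖(w : X)‖) c]
        calc p (c • v) ≤ ‖c • v + (c • (w : X))‖ + ε * ‖c • (w : X)‖ :=
              p_le (c • v) ⟨c • (w : X), hWsmul c _ w.2⟩
          _ = c * (‖v + (w : X)‖ + ε * ‖(w : X)‖) := by
              rw [← smul_add, norm_smul, norm_smul, Real.norm_eq_abs, abs_of_pos hc]; ring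
      · apply le_p
        intro w
        have hw' : c⁻¹ • (w : X) ∈ W := hWsmul _ _ w.2
        have h1 : p v ≤ ‖v + c⁻¹ • (w : X)‖ + ε * ‖c⁻¹ • (w : X)‖ := p_le v ⟨_, hw'⟩
        have hcs : c • (v + c⁻¹ • (w : X)) = c • v + (w : X) := by
          rw [smul_add, smul_inv_smul₀ hc.ne']
        have hcs2 : c • (c⁻¹ • (w : X)) = (w : X) := smul_inv_smul₀ hc.ne' _
        have e1 : ‖c • v + (w : X)‖ = c * ‖v + c⁻¹ • (w : X)‖ := by
          rw [← hcs, norm_smul, Real.norm_eq_abs, abs_of_pos hc]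
        have e2 : ‖(w : X)‖ = c * ‖c⁻¹ • (w : X)‖ := by
          calc ‖(w : X)‖ = ‖c • (c⁻¹ • (w : X))‖ := by rw [hcs2]
            _ = c * ‖c⁻¹ • (w : X)‖ := by rw [norm_smul, Real.norm_eq_abs, abs_of_pos hc]
        calc c * p v ≤ c * (‖v + c⁻¹ • (w : X)‖ + ε * ‖c⁻¹ • (w : X)‖) :=
              mul_le_mul_of_nonneg_left h1 hc.le
          _ = ‖c • v + (w : X)‖ + ε * ‖(w : X)‖ := by rw [e1, e2]; ring
    have N_add : ∀ v₁ v₂ : X, p (v₁ + v₂) ≤ p v₁ + p v₂ := by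
      intro v₁ v₂
      have step : ∀ w₁ w₂ : W, p (v₁ + v₂) ≤
          (‖v₁ + (w₁ : X)‖ + ε * ‖(w₁ : X)‖) + (‖v₂ + (w₂ : X)‖ + ε * ‖(w₂ : X)‖) := by
        intro w₁ w₂
        have hmem : (w₁ : X) + (w₂ : X) ∈ W := W.add_mem w₁.2 w₂.2
        have h1 : p (v₁ + v₂) ≤ ‖v₁ + v₂ + ((w₁ : X) + (w₂ : X))‖ + ε * ‖(w₁ : X) + (w₂ : X)‖ :=
          p_le (v₁ + v₂) ⟨_, hmem⟩
        have h2 : ‖v₁ + v₂ + ((w₁ : X) + (w₂ : X))‖ ≤ ‖v₁ + (w₁ : X)‖ + ‖v₂ + (w₂ : X)‖ := by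
          have : v₁ + v₂ + ((w₁ : X) + (w₂ : X)) = (v₁ + (w₁ : X)) + (v₂ + (w₂ : X)) := by abel
          rw [this]; exact norm_add_le _ _
        have h3 : ε * ‖(w₁ : X) + (w₂ : X)‖ ≤ ε * (‖(w₁ : X)‖ + ‖(w₂ : X)‖) :=
          mul_le_mul_of_nonneg_left (norm_add_le _ _) hε0
        linarith
      have h1 : ∀ w₁ : W, p (v₁ + v₂) - (‖v₁ + (w₁ : X)‖ + ε * ‖(w₁ : X)‖) ≤ p v₂ := by
        intro w₁
        apply le_p
        intro w₂
        linarith [step w₁ w₂]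
      have h2 : p (v₁ + v₂) - p v₂ ≤ p v₁ := by
        apply le_p
        intro w₁
        linarith [h1 w₁]
      linarith
    -- the linear functional on the span of x
    have hpx : ‖x‖ ≤ p x := le_p x ‖x‖ fun w => key (w : X) w.2
    set f₀ : X →ₗ.[ℝ] ℝ := LinearPMap.mkSpanSingleton x (‖x‖ : ℝ) hx with hf₀
    have hdom : ∀ y : f₀.domain, f₀ y ≤ p y := by
      rintro ⟨y, hy⟩
      obtain ⟨c, rfl⟩ := Submodule.mem_span_singleton.mp hy
      have happ : f₀ ⟨c • x, hy⟩ = c • (‖x‖ : ℝ) := LinearPMap.mkSpanSingleton'_apply x _ _ c hy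
      rw [happ]
      rcases le_or_gt c 0 with hc | hc
      · have : c • (‖x‖ : ℝ) ≤ 0 := by
          rw [smul_eq_mul]
          exact mul_nonpos_of_nonpos_of_nonneg hc (norm_nonneg x)
        exact this.trans (p_nonneg _)
      · have := N_hom c hc x
        rw [smul_eq_mul, this]
        exact mul_le_mul_of_nonneg_left hpx hc.le
    obtain ⟨g, hg_eq, hg_le⟩ := exists_extension_of_le_sublinear f₀ p N_hom N_add hdom
    have hxmem : x ∈ f₀.domain := Submodule.mem_span_singleton_self x
    have hgx : g x = ‖x‖ := by
      have h1 := hg_eq ⟨x, hxmem⟩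
      have h2 : f₀ ⟨x, hxmem⟩ = ‖x‖ := LinearPMap.mkSpanSingleton_apply ℝ ℝ hx _
      rw [h1, h2]
    have hgbound : ∀ v : X, ‖g v‖ ≤ 1 * ‖v‖ := by
      intro v
      rw [one_mul, Real.norm_eq_abs, abs_le]
      constructor
      · have := (hg_le (-v)).trans (p_le_norm (-v))
        rw [map_neg, norm_neg] at this
        linarith
      · exact (hg_le v).trans (p_le_norm v)
    set G : X →L[ℝ] ℝ := LinearMap.mkContinuous g 1 hgbound with hG
    set F : X →L[𝕜] 𝕜 := G.extendTo𝕜' with hF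
    have hF_app : ∀ v : X, F v = G.toLinearMap.extendTo𝕜' v := fun v => rfl
    have hFre : ∀ v : X, RCLike.re (F v) = g v := by
      intro v
      rw [hF_app]
      exact LinearMap.extendTo𝕜'_apply_re (𝕜 := 𝕜) G.toLinearMap v
    have hGnorm : ‖G‖ ≤ 1 := LinearMap.mkContinuous_norm_le g zero_le_one hgbound
    have hFnorm_le : ‖F‖ ≤ 1 := by
      rw [hF, show ‖(G.extendTo𝕜' : X →L[𝕜] 𝕜)‖ = ‖G‖ from ContinuousLinearMap.norm_extendTo𝕜' G]
      exact hGnorm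
    have hFx : F x = (‖x‖ : 𝕜) := by
      have h1 : RCLike.re (F x) = ‖x‖ := by rw [hFre, hgx]
      have h2 : ‖F x‖ ≤ ‖x‖ := by
        calc ‖F x‖ ≤ ‖F‖ * ‖x‖ := F.le_opNorm x
          _ ≤ 1 * ‖x‖ := mul_le_mul_of_nonneg_right hFnorm_le (norm_nonneg x)
          _ = ‖x‖ := one_mul _
      have h3 : RCLike.im (F x) = 0 := by
        have hsq : ‖F x‖ ^ 2 = RCLike.re (F x) ^ 2 + RCLike.im (F x) ^ 2 := by
          rw [RCLike.norm_sq_eq_def]; ring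
        have h4 : RCLike.im (F x) ^ 2 ≤ 0 := by nlinarith [norm_nonneg (F x)]
        exact sq_eq_zero_iff.mp (le_antisymm h4 (sq_nonneg _))
      apply RCLike.ext
      · rw [h1]; simp
      · rw [h3]; simp
    have hFnorm : ‖F‖ = 1 := by
      refine le_antisymm hFnorm_le ?_
      have h1 : ‖x‖ ≤ ‖F‖ * ‖x‖ := by
        calc ‖x‖ = ‖F x‖ := by rw [hFx]; simp [hxpos.le]
          _ ≤ ‖F‖ * ‖x‖ := F.le_opNorm x
      by_contra hcon
      push_neg at hcon
      nlinarith
    have hpW : ∀ u ∈ W, p u ≤ ε * ‖u‖ := by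
      intro u hu
      have := p_le u ⟨-u, W.neg_mem hu⟩
      simpa using this
    have hgW : ∀ u ∈ W, g u ≤ ε * ‖u‖ := fun u hu => (hg_le u).trans (hpW u hu)
    have hW : ∀ u ∈ W, ‖F u‖ ≤ ε * ‖u‖ := by
      intro u hu
      by_cases h0 : F u = 0
      · rw [h0, norm_zero]; positivity
      · have hsq : ‖F u‖ ^ 2 = g ((starRingEnd 𝕜) (F u) • u) := by
          have := LinearMap.norm_extendTo𝕜'_apply_sq (𝕜 := 𝕜) G.toLinearMap u
          rw [hF_app]
          convert this using 3
          all_goals rfl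
        have hmem : (starRingEnd 𝕜) (F u) • u ∈ W := W.smul_mem _ hu
        have hle := hgW _ hmem
        have hnorm : ‖(starRingEnd 𝕜) (F u) • u‖ = ‖F u‖ * ‖u‖ := by
          rw [norm_smul, RCLike.norm_conj]
        have hFu : 0 < ‖F u‖ := norm_pos_iff.mpr h0
        rw [hnorm] at hle
        have hineq : ‖F u‖ ^ 2 ≤ ε * (‖F u‖ * ‖u‖) := by rw [hsq]; exact hle
        nlinarith [hineq, hFu]
    refine ⟨F, hFnorm, hFx, ?_⟩
    apply ContinuousLinearMap.opNorm_le_bound _ hε0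
    intro w
    have : (F ∘L W.subtypeL) w = F (w : X) := rfl
    rw [this]
    have hnw : ‖w‖ = ‖(w : X)‖ := rfl
    rw [hnw]
    exact hW (w : X) w.2
  · rintro ⟨f, hf1, hfx, hfW⟩ w hw
    have hfw : ‖f w‖ ≤ ε * ‖w‖ := by
      have h0 : (f ∘L W.subtypeL) ⟨w, hw⟩ = f w := rfl
      have h1 := ContinuousLinearMap.le_opNorm (f ∘L W.subtypeL) ⟨w, hw⟩
      rw [h0] at h1
      have h2 : ‖(⟨w, hw⟩ : W)‖ = ‖w‖ := rfl
      rw [h2] at h1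
      calc ‖f w‖ ≤ ‖f ∘L W.subtypeL‖ * ‖w‖ := h1
        _ ≤ ε * ‖w‖ := mul_le_mul_of_nonneg_right hfW (norm_nonneg w)
    have hre : ‖x‖ ≤ ‖x + w‖ + ε * ‖w‖ := by
      have e1 : (‖x‖ : ℝ) = RCLike.re (f x) := by rw [hfx, RCLike.ofReal_re]
      have e2 : RCLike.re (f (x + w)) = RCLike.re (f x) + RCLike.re (f w) := by
        rw [map_add, map_add]
      have e3 : RCLike.re (f (x + w)) ≤ ‖f (x + w)‖ := RCLike.re_le_norm _
      have e4 : -‖f w‖ ≤ RCLike.re (f w) := by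
        have := RCLike.abs_re_le_norm (f w)
        rw [abs_le] at this
        exact this.1
      have e5 : ‖f (x + w)‖ ≤ ‖x + w‖ := by
        calc ‖f (x + w)‖ ≤ ‖f‖ * ‖x + w‖ := f.le_opNorm _
          _ = ‖x + w‖ := by rw [hf1, one_mul]
      linarith
    nlinarith [mul_nonneg (norm_nonneg x) (show (0:ℝ) ≤ ‖x + w‖ + ε * ‖w‖ - ‖x‖ by linarith),
      sq_nonneg (‖x + w‖ - ‖x‖), norm_nonneg w, norm_nonneg (x + w)]
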